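/- arXiv:1301.7462 — 4 statements merged into one kernel-verified Lean document; each statement's English description precedes it below -/
import Mathlib

section
/- Let V be a type, E : V → V → Prop a directed edge relation, c : V → V → ℝ, s : V, dist : V → ℝ, and num : V → ℕ∞ (naturals extended with ∞). Assume: (1) dist(s) = 0; (2) justification: for every vertex v with v ≠ s and num(v) ≠ ∞ there exists u with E u v, dist(v) = dist(u) + c(u, v), and num(v) = num(u) + 1; (3) for every u ≠ s with num(u) ≠ ∞, num(u) ≠ 0. Then for every vertex v with num(v) ≠ ∞ there exists a walk s = v₀, v₁, …, v_k = v with E v_i v_{i+1} for all 0 ≤ i < k whose cost Σ_{i<k} c(v_i, v_{i+1}) equals dist(v). In particular dist(v) is at least the shortest-path distance from s to v. -/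
theorem dist_ge_mu_witness {V : Type*}
    (E : V → V → Prop) (c : V → V → ℝ) (s : V)
    (dist : V → ℝ) (num : V → ℕ∞)
    (hs : dist s = 0)
    (just : ∀ v : V, v ≠ s → num v ≠ ⊤ →
      ∃ u : V, E u v ∧ dist v = dist u + c u v ∧ num v = num u + 1)
    (hnum : ∀ u : V, u ≠ s → num u ≠ ⊤ → num u ≠ 0) :
    ∀ v : V, num v ≠ ⊤ →
      ∃ (k : ℕ) (p : ℕ → V),
        p 0 = s ∧ p k = v ∧ (∀ i < k, E (p i) (p (i + 1))) ∧
        ∑ i ∈ Finset.range k, c (p i) (p (i + 1)) = dist v := by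
  intro v hv
  obtain ⟨n, hn⟩ := WithTop.ne_top_iff_exists.mp hv
  induction n using Nat.strong_induction_on generalizing v with
  | _ n ih =>
    by_cases hvs : v = s
    · exact ⟨0, fun _ => s, rfl, hvs.symm, by simp, by simp [hvs, hs]⟩
    · obtain ⟨u, hE, hd, hnum'⟩ := just v hvs hv
      have hu : num u ≠ ⊤ := fun h => hv (by rw [hnum', h, top_add])
      obtain ⟨m, hm⟩ := WithTop.ne_top_iff_exists.mp hu
      have hmn : m < n := by
        have h1 := hn.trans hnum'
        rw [← hm] at h1
        have h2 : n = m + 1 := by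
          have h1 : n = m + 1 := WithTop.coe_injective (h1.trans rfl)
          exact h1
        omega
      obtain ⟨k, p, hp0, hpk, hpe, hps⟩ := ih m hmn u hu hm
      refine ⟨k + 1, fun i => if i ≤ k then p i else v, by simp [hp0], by simp, ?_, ?_⟩
      · intro i hi
        rcases Nat.lt_or_ge i k with h | h
        · simp only [Nat.le_of_lt h, if_pos, Nat.succ_le_of_lt h]
          exact hpe i h
        · have : i = k := by omega
          subst this
          simp [hpk, hE]
      · simp only [Finset.sum_range_succ]
        rw [if_pos (le_refl k), if_neg (Nat.not_succ_le_self k), hpk]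
        have hc : ∑ i ∈ Finset.range k, c (if i ≤ k then p i else v)
            (if i + 1 ≤ k then p (i + 1) else v) = dist u := by
          rw [← hps]
          apply Finset.sum_congr rfl
          intro i hi
          simp only [Finset.mem_range] at hi
          rw [if_pos (by omega), if_pos (by omega)]
        rw [hc, hd]
end

section
/- Let V be a type, E : V → V → Prop a directed edge relation, c : V → V → ℝ with c(u, v) ≥ 0 whenever E u v, s : V, dist : V → EReal, and num : V → ℕ∞. Assume: (1) dist(s) = 0; (2) consistency: for every v, dist(v) = +∞ if and only if num(v) = ∞; (3) triangle inequality: for all u, v with E u v, dist(v) ≤ dist(u) + c(u, v); (4) justification: for every v with v ≠ s and num(v) ≠ ∞ there exists u with E u v, dist(v) = dist(u) + c(u, v), and num(v) = num(u) + 1. Then for every vertex v: (a) dist(v) ≠ +∞ if and only if there exists a walk from s to v; (b) for every walk from s to v, its cost is at least dist(v); and (c) if dist(v) ≠ +∞, there exists a walk from s to v whose cost equals dist(v). Hence dist(v) is exactly the shortest-path distance from s to v (and +∞ for unreachable v). -/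
theorem shortest_path_witness_property {V : Type*}
    (E : V → V → Prop) (c : V → V → ℝ) (s : V)
    (dist : V → EReal) (num : V → ℕ∞)
    (hc : ∀ u v : V, E u v → 0 ≤ c u v)
    (hs : dist s = 0)
    (no_path : ∀ v : V, dist v = ⊤ ↔ num v = ⊤)
    (trian : ∀ u v : V, E u v → dist v ≤ dist u + (c u v : EReal))
    (just : ∀ v : V, v ≠ s → num v ≠ ⊤ →
      ∃ u : V, E u v ∧ dist v = dist u + (c u v : EReal) ∧ num v = num u + 1) :
    ∀ v : V,
      (dist v ≠ ⊤ ↔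
        ∃ (k : ℕ) (p : ℕ → V),
          p 0 = s ∧ p k = v ∧ ∀ i < k, E (p i) (p (i + 1))) ∧
      (∀ (k : ℕ) (p : ℕ → V),
        p 0 = s → p k = v → (∀ i < k, E (p i) (p (i + 1))) →
        dist v ≤ ((∑ i ∈ Finset.range k, c (p i) (p (i + 1)) : ℝ) : EReal)) ∧
      (dist v ≠ ⊤ →
        ∃ (k : ℕ) (p : ℕ → V),
          p 0 = s ∧ p k = v ∧ (∀ i < k, E (p i) (p (i + 1))) ∧
          dist v = ((∑ i ∈ Finset.range k, c (p i) (p (i + 1)) : ℝ) : EReal)) := by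
  have lb : ∀ (k : ℕ) (p : ℕ → V), p 0 = s → (∀ i < k, E (p i) (p (i + 1))) →
      dist (p k) ≤ ((∑ i ∈ Finset.range k, c (p i) (p (i + 1)) : ℝ) : EReal) := by
    intro k
    induction k with
    | zero => intro p h0 _; simp [h0, hs]
    | succ k ih =>
      intro p h0 hE
      have h1 := ih p h0 (fun i hi => hE i (Nat.lt_succ_of_lt hi))
      calc dist (p (k + 1)) ≤ dist (p k) + (c (p k) (p (k + 1)) : EReal) :=
            trian _ _ (hE k (Nat.lt_succ_self k))
        _ ≤ ((∑ i ∈ Finset.range k, c (p i) (p (i + 1)) : ℝ) : EReal)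
            + (c (p k) (p (k + 1)) : EReal) := add_le_add_left h1 _
        _ = _ := by rw [Finset.sum_range_succ, EReal.coe_add]
  have reach : ∀ (n : ℕ) (v : V), num v = (n : ℕ∞) →
      ∃ (k : ℕ) (p : ℕ → V), p 0 = s ∧ p k = v ∧ (∀ i < k, E (p i) (p (i + 1))) ∧
        dist v = ((∑ i ∈ Finset.range k, c (p i) (p (i + 1)) : ℝ) : EReal) := by
    intro n
    induction n using Nat.strong_induction_on with
    | _ n ih =>
      intro v hv
      by_cases hvs : v = s
      · exact ⟨0, fun _ => v, hvs, rfl, by intro i hi; omega, by simp [hvs, hs]⟩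
      · have hnv : num v ≠ ⊤ := by simp [hv]
        obtain ⟨u, hE, hd, hn⟩ := just v hvs hnv
        have hu : num u ≠ ⊤ := by
          intro h
          rw [h] at hn
          simp at hn
          exact hnv hn
        lift num u to ℕ using hu with m hm
        have hmn : m + 1 = n := by
          rw [hv] at hn
          exact_mod_cast hn.symm
        obtain ⟨k, p, hp0, hpk, hpE, hsum⟩ := ih m (by omega) u hm.symm
        refine ⟨k + 1, fun i => if i ≤ k then p i else v, by simp [hp0], by simp, ?_, ?_⟩
        · intro i hi
          rcases Nat.lt_or_ge i k with h | h
          · simpa [Nat.le_of_lt h, Nat.succ_le_of_lt h] using hpE i h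
          · have : i = k := by omega
            subst this
            simpa [hpk] using hE
        · have hseq : ∑ i ∈ Finset.range k,
              c (if i ≤ k then p i else v) (if i + 1 ≤ k then p (i + 1) else v)
              = ∑ i ∈ Finset.range k, c (p i) (p (i + 1)) := by
            apply Finset.sum_congr rfl
            intro i hi
            have hik : i < k := Finset.mem_range.mp hi
            simp [Nat.le_of_lt hik, Nat.succ_le_of_lt hik]
          rw [hd, hsum, Finset.sum_range_succ]
          simp only [hseq]
          rw [EReal.coe_add]
          congr 1
          simp [hpk]
  intro v
  refine ⟨⟨?_, ?_⟩, ?_, ?_⟩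
  · intro hv
    have hnv : num v ≠ ⊤ := fun h => hv ((no_path v).mpr h)
    lift num v to ℕ using hnv with n hn
    obtain ⟨k, p, hp0, hpk, hpE, _⟩ := reach n v hn.symm
    exact ⟨k, p, hp0, hpk, hpE⟩
  · rintro ⟨k, p, hp0, hpk, hpE⟩
    have := lb k p hp0 hpE
    rw [hpk] at this
    exact ne_top_of_le_ne_top (EReal.coe_ne_top _) this
  · intro k p hp0 hpk hpE
    have := lb k p hp0 hpE
    rwa [hpk] at this
  · intro hv
    have hnv : num v ≠ ⊤ := fun h => hv ((no_path v).mpr h)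
    lift num v to ℕ using hnv with n hn
    exact reach n v hn.symm
end

section
/- Let G be a simple graph on a finite vertex type V and let L : V → ℕ be an odd-set cover of G, i.e., for every edge {u, v} of G either L(u) = 1, or L(v) = 1, or L(u) = L(v) and L(u) ≥ 2. For each i ≥ 0 let n_i denote the number of vertices v with L(v) = i. Then every matching N of G satisfies |N| ≤ n₁ + Σ_{i≥2} ⌊n_i / 2⌋ (the sum taken over all labels i ≥ 2 occurring as values of L). -/
theorem odd_set_cover_bound {V : Type*} [Fintype V] [DecidableEq V]
    (G : SimpleGraph V) [DecidableRel G.Adj]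
    (L : V → ℕ)
    (hosc : ∀ u v : V, G.Adj u v →
      L u = 1 ∨ L v = 1 ∨ (L u = L v ∧ 2 ≤ L u))
    (n : ℕ → ℕ) (hn : ∀ i, n i = (Finset.univ.filter (fun v => L v = i)).card)
    (N : Finset (Sym2 V))
    (hsub : N ⊆ G.edgeFinset)
    (hmatch : ∀ e₁ ∈ N, ∀ e₂ ∈ N, e₁ ≠ e₂ → ∀ v : V, ¬ (v ∈ e₁ ∧ v ∈ e₂)) :
    N.card ≤ n 1 + ∑ i ∈ (Finset.univ.image L).filter (fun i => 2 ≤ i), n i / 2 := by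
  classical
  -- endpoints of an edge as a finset
  set tf : Sym2 V → Finset V := fun e => {(Quot.out e).1, (Quot.out e).2} with htf
  have hmem_tf : ∀ (e : Sym2 V) (v : V), v ∈ tf e ↔ v ∈ e := by
    intro e v
    constructor
    · intro hv; rw [← e.out_eq, Sym2.mem_iff]; simpa [htf] using hv
    · intro hv; rw [← e.out_eq, Sym2.mem_iff] at hv; simpa [htf] using hv
  have hadj : ∀ e ∈ N, G.Adj (Quot.out e).1 (Quot.out e).2 := by
    intro e he
    have : e ∈ G.edgeSet := by simpa using hsub he
    rw [← e.out_eq] at this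
    exact this
  have hcard_tf : ∀ e ∈ N, (tf e).card = 2 := by
    intro e he
    have hne : (Quot.out e).1 ≠ (Quot.out e).2 := (hadj e he).ne
    simp [htf, Finset.card_insert_of_notMem, hne]
  -- split N
  set S1 := N.filter (fun e => ∃ v ∈ e, L v = 1) with hS1
  set S2 := N.filter (fun e => ¬ ∃ v ∈ e, L v = 1) with hS2
  have hsplit : N.card = S1.card + S2.card := by
    rw [hS1, hS2]
    exact (Finset.card_filter_add_card_filter_not _).symm
  -- bound S1
  set g : Sym2 V → V := fun e =>
    if h : ∃ v, v ∈ e ∧ L v = 1 then h.choose else (Quot.out e).1 with hg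
  have hgspec : ∀ e ∈ S1, g e ∈ e ∧ L (g e) = 1 := by
    intro e he
    rw [hS1, Finset.mem_filter] at he
    obtain ⟨-, v, hv, hLv⟩ := he
    have h : ∃ v, v ∈ e ∧ L v = 1 := ⟨v, hv, hLv⟩
    simp only [hg, dif_pos h]
    exact h.choose_spec
  have h1 : S1.card ≤ n 1 := by
    rw [hn 1]
    apply Finset.card_le_card_of_injOn g
    · intro e he
      simp [(hgspec e he).2]
    · intro e₁ he₁ e₂ he₂ heq
      by_contra hne
      exact hmatch e₁ (Finset.mem_of_mem_filter _ he₁) e₂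
        (Finset.mem_of_mem_filter _ he₂) hne (g e₁)
        ⟨(hgspec e₁ he₁).1, heq ▸ (hgspec e₂ he₂).1⟩
  -- labels of S2 edges
  set lab : Sym2 V → ℕ := fun e => L (Quot.out e).1 with hlab
  have hS2lab : ∀ e ∈ S2, (∀ v ∈ e, L v = lab e) ∧ 2 ≤ lab e := by
    intro e he
    rw [hS2, Finset.mem_filter] at he
    obtain ⟨heN, hno1⟩ := he
    push_neg at hno1
    have hA := hadj e heN
    have h1 : (Quot.out e).1 ∈ e := by rw [← hmem_tf]; simp [htf]
    have h2 : (Quot.out e).2 ∈ e := by rw [← hmem_tf]; simp [htf]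
    rcases hosc _ _ hA with h | h | ⟨heq, hge⟩
    · exact absurd h (hno1 _ h1)
    · exact absurd h (hno1 _ h2)
    · refine ⟨?_, hge⟩
      intro v hv
      rw [← e.out_eq, Sym2.mem_iff] at hv
      rcases hv with rfl | rfl
      · rfl
      · exact heq.symm
  have h2 : S2.card ≤ ∑ i ∈ (Finset.univ.image L).filter (fun i => 2 ≤ i), n i / 2 := by
    rw [Finset.card_eq_sum_card_fiberwise (f := lab)
      (t := (Finset.univ.image L).filter (fun i => 2 ≤ i))
      (fun e he => by
        rw [Finset.mem_coe, Finset.mem_filter]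
        exact ⟨Finset.mem_image.mpr ⟨_, Finset.mem_univ _, rfl⟩, (hS2lab e (Finset.mem_coe.mp he)).2⟩)]
    apply Finset.sum_le_sum
    intro i hi
    set T := S2.filter (fun e => lab e = i) with hT
    have hTN : ∀ e ∈ T, e ∈ N := by
      intro e he
      exact Finset.mem_of_mem_filter _ (Finset.mem_of_mem_filter _ he)
    rw [Nat.le_div_iff_mul_le (by norm_num : 0 < 2)]
    have hdisj : (T : Set (Sym2 V)).PairwiseDisjoint tf := by
      intro e₁ he₁ e₂ he₂ hne
      rw [Function.onFun, Finset.disjoint_left]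
      intro v hv1 hv2
      exact hmatch e₁ (hTN e₁ he₁) e₂ (hTN e₂ he₂) hne v
        ⟨(hmem_tf e₁ v).mp hv1, (hmem_tf e₂ v).mp hv2⟩
    have hsubV : T.biUnion tf ⊆ Finset.univ.filter (fun v => L v = i) := by
      intro v hv
      rw [Finset.mem_biUnion] at hv
      obtain ⟨e, he, hv⟩ := hv
      have heS2 : e ∈ S2 := Finset.mem_of_mem_filter _ he
      have hlabi : lab e = i := (Finset.mem_filter.mp he).2
      simp only [Finset.mem_filter, Finset.mem_univ, true_and]
      rw [(hS2lab e heS2).1 v ((hmem_tf e v).mp hv), hlabi]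
    calc T.card * 2 = ∑ e ∈ T, (tf e).card := by
          rw [Finset.sum_congr rfl (fun e he => hcard_tf e (hTN e he))]
          simp [mul_comm]
      _ = (T.biUnion tf).card := (Finset.card_biUnion (fun e he₁ f he₂ => hdisj he₁ he₂)).symm
      _ ≤ n i := by rw [hn i]; exact Finset.card_le_card hsubV
  omega
end

section
/- (Edmonds) Let G be a simple graph on a finite vertex type V, let M be a matching in G, and let L : V → ℕ be an odd-set cover of G, i.e., for every edge {u, v} of G either L(u) = 1, or L(v) = 1, or L(u) = L(v) and L(u) ≥ 2. For each i ≥ 0 let n_i denote the number of vertices v with L(v) = i. If |M| = n₁ + Σ_{i≥2} ⌊n_i / 2⌋ (the sum taken over all labels i ≥ 2 occurring as values of L), then M is a maximum cardinality matching of G: every matching N of G satisfies |N| ≤ |M|. -/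
theorem edmonds_witness_property {V : Type*} [Fintype V] [DecidableEq V]
    (G : SimpleGraph V) [DecidableRel G.Adj]
    (L : V → ℕ)
    (hosc : ∀ u v : V, G.Adj u v →
      L u = 1 ∨ L v = 1 ∨ (L u = L v ∧ 2 ≤ L u))
    (n : ℕ → ℕ) (hn : ∀ i, n i = (Finset.univ.filter (fun v => L v = i)).card)
    (M : Finset (Sym2 V))
    (hMsub : M ⊆ G.edgeFinset)
    (hMmatch : ∀ e₁ ∈ M, ∀ e₂ ∈ M, e₁ ≠ e₂ → ∀ v : V, ¬ (v ∈ e₁ ∧ v ∈ e₂))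
    (hcard : M.card = n 1 + ∑ i ∈ (Finset.univ.image L).filter (fun i => 2 ≤ i), n i / 2) :
    ∀ N : Finset (Sym2 V),
      N ⊆ G.edgeFinset →
      (∀ e₁ ∈ N, ∀ e₂ ∈ N, e₁ ≠ e₂ → ∀ v : V, ¬ (v ∈ e₁ ∧ v ∈ e₂)) →
      N.card ≤ M.card := by
  classical
  intro N hNsub hNmatch
  rw [hcard]
  set N₁ := N.filter (fun e => ∃ v ∈ e, L v = 1) with hN1def
  set N₂ := N.filter (fun e => ¬ ∃ v ∈ e, L v = 1) with hN2def
  have hsplit : N₁.card + N₂.card = N.card :=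
    Finset.card_filter_add_card_filter_not _
  -- endpoints of an edge have card 2
  have hend : ∀ e ∈ N, (Finset.univ.filter (fun v => v ∈ e)).card = 2 := by
    intro e he
    have he' : e ∈ G.edgeSet := SimpleGraph.mem_edgeFinset.mp (hNsub he)
    induction e with
    | h u v =>
      have hadj : G.Adj u v := he'
      have hne : u ≠ v := hadj.ne
      have : (Finset.univ.filter (fun w => w ∈ s(u, v))) = {u, v} := by
        ext w; simp [Sym2.mem_iff]
      rw [this, Finset.card_insert_of_notMem (by simp [hne]), Finset.card_singleton]
  -- bound on N₁
  set f : Sym2 V → V := fun e =>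
    if h : ∃ v ∈ e, L v = 1 then h.choose else (Quot.out e).1 with hfdef
  have hf : ∀ e ∈ N₁, f e ∈ e ∧ L (f e) = 1 := by
    intro e he
    have h := (Finset.mem_filter.mp he).2
    simp only [hfdef, dif_pos h]
    exact h.choose_spec
  have h1 : N₁.card ≤ n 1 := by
    rw [hn 1]
    apply Finset.card_le_card_of_injOn f
    · intro e he
      rw [Finset.mem_coe]
      simp only [Finset.mem_filter, Finset.mem_univ, true_and]
      exact (hf e he).2
    · intro e₁ he₁ e₂ he₂ heq
      by_contra hne
      exact hNmatch e₁ (Finset.filter_subset _ _ he₁) e₂ (Finset.filter_subset _ _ he₂)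
        hne (f e₁) ⟨(hf e₁ he₁).1, heq ▸ (hf e₂ he₂).1⟩
  -- label of an edge
  set lab : Sym2 V → ℕ := Sym2.lift ⟨fun u v => max (L u) (L v), fun u v => max_comm _ _⟩
    with hlabdef
  have hlab : ∀ e ∈ N₂, (∀ v ∈ e, L v = lab e) ∧ 2 ≤ lab e := by
    intro e he
    obtain ⟨heN, hno1⟩ := Finset.mem_filter.mp he
    have he' : e ∈ G.edgeSet := SimpleGraph.mem_edgeFinset.mp (hNsub heN)
    induction e with
    | h u v =>
      have hadj : G.Adj u v := he'
      rcases hosc u v hadj with h | h | ⟨heq, h2⟩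
      · exact absurd ⟨u, by simp, h⟩ hno1
      · exact absurd ⟨v, by simp, h⟩ hno1
      · constructor
        · intro w hw
          rcases Sym2.mem_iff.mp hw with rfl | rfl <;>
            simp [hlabdef, heq, max_self]
        · simpa [hlabdef, heq, max_self] using h2
  -- per-label bound
  have hterm : ∀ i, (N₂.filter (fun e => lab e = i)).card ≤ n i / 2 := by
    intro i
    set F := N₂.filter (fun e => lab e = i) with hFdef
    have hFN : F ⊆ N := fun e he =>
      Finset.filter_subset _ _ (Finset.filter_subset _ _ he)
    rw [Nat.le_div_iff_mul_le (by norm_num : 0 < 2)]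
    set T := F.biUnion (fun e => Finset.univ.filter (fun v => v ∈ e)) with hTdef
    have hTcard : T.card = F.card * 2 := by
      rw [hTdef, Finset.card_biUnion]
      · rw [Finset.sum_congr rfl (fun e he => hend e (hFN he)), Finset.sum_const,
          smul_eq_mul]
      · intro e₁ he₁ e₂ he₂ hne
        rw [Function.onFun, Finset.disjoint_left]
        intro v hv₁ hv₂
        exact hNmatch e₁ (hFN he₁) e₂ (hFN he₂) hne v
          ⟨(Finset.mem_filter.mp hv₁).2, (Finset.mem_filter.mp hv₂).2⟩
    have hTsub : T ⊆ Finset.univ.filter (fun v => L v = i) := by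
      intro v hv
      obtain ⟨e, he, hv⟩ := Finset.mem_biUnion.mp hv
      obtain ⟨heN₂, hlabi⟩ := Finset.mem_filter.mp he
      have := (hlab e heN₂).1 v (Finset.mem_filter.mp hv).2
      simp [this, hlabi]
    calc F.card * 2 = T.card := hTcard.symm
      _ ≤ _ := Finset.card_le_card hTsub
      _ = n i := (hn i).symm
  have h2 : N₂.card ≤ ∑ i ∈ (Finset.univ.image L).filter (fun i => 2 ≤ i), n i / 2 := by
    rw [Finset.card_eq_sum_card_image lab N₂]
    have hsub : N₂.image lab ⊆ (Finset.univ.image L).filter (fun i => 2 ≤ i) := by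
      intro i hi
      obtain ⟨e, he, rfl⟩ := Finset.mem_image.mp hi
      obtain ⟨hall, h2e⟩ := hlab e he
      obtain ⟨v, hv⟩ : ∃ v, v ∈ e := ⟨e.out.1, Sym2.out_fst_mem e⟩
      refine Finset.mem_filter.mpr ⟨Finset.mem_image.mpr ⟨v, Finset.mem_univ _, hall v hv⟩, h2e⟩
    calc ∑ i ∈ N₂.image lab, (N₂.filter (fun e => lab e = i)).card
        ≤ ∑ i ∈ N₂.image lab, n i / 2 := Finset.sum_le_sum (fun i _ => hterm i)
      _ ≤ _ := Finset.sum_le_sum_of_subset hsub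
  omega
end
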